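/- Let ℓ : Δ_{k,n} → [k] be a labeling whose inadmissible labels all lie on the face x_k = 0 and are all equal to k. Let Z be the set of inadmissibly labeled vertices. Then the number of monochromatic hyperedges of H_{k,n} that contain a vertex of Z is at most (n/(n+k-2))·|Z|. -/

import Mathlib

open scoped BigOperators

/-- The discretized simplex `Δ_{k,n}`: points with nonnegative coordinates that are
integer multiples of `1/n` summing to `1`. -/
def disimplex (k n : ℕ) : Set (Fin k → ℚ) :=
  {x | (∀ i, 0 ≤ x i) ∧ (∀ i, ∃ m : ℤ, (n : ℚ) * x i = (m : ℚ)) ∧ ∑ i, x i = 1}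

/-- The `i`-th standard unit vector in `ℚ^k`. -/
def stdVec (k : ℕ) (i : Fin k) : Fin k → ℚ := fun j => if j = i then 1 else 0

/-- The hyperedge of `H_{k,n}` indexed by a point `z` of `Δ_{k,n-1}`. -/
def hyperedge (k n : ℕ) (z : Fin k → ℚ) : Set (Fin k → ℚ) :=
  {y | ∃ i : Fin k, y = fun j => (((n : ℚ) - 1) / n) * z j + (1 / n) * stdVec k i j}

/-- The set of hyperedges of the hypergraph `H_{k,n}`. -/
def hyperedges (k n : ℕ) : Set (Set (Fin k → ℚ)) :=
  (hyperedge k n) '' (disimplex k (n - 1))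

/-- The `i`-th vertex of the hyperedge indexed by `z`. -/
def vert (k n : ℕ) (z : Fin k → ℚ) (i : Fin k) : Fin k → ℚ :=
  fun j => (((n : ℚ) - 1) / n) * z j + (1 / n) * stdVec k i j

lemma vert_mem_hyperedge (k n : ℕ) (z : Fin k → ℚ) (i : Fin k) :
    vert k n z i ∈ hyperedge k n z := ⟨i, rfl⟩

lemma mem_hyperedge_iff (k n : ℕ) (z y : Fin k → ℚ) :
    y ∈ hyperedge k n z ↔ ∃ i, y = vert k n z i := Iff.rfl

lemma sum_stdVec (k : ℕ) (i : Fin k) : ∑ j, stdVec k i j = 1 := by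
  simp [stdVec]

lemma disimplex_finite (k n : ℕ) (hn : 1 ≤ n) : (disimplex k n).Finite := by
  have hsub : disimplex k n ⊆
      Set.pi Set.univ (fun _ : Fin k => (fun m : ℕ => (m : ℚ) / n) '' Set.Iic n) := by
    rintro x ⟨h0, hint, hsum⟩ i _
    obtain ⟨m, hm⟩ := hint i
    have hn0 : (0 : ℚ) < (n : ℚ) := by exact_mod_cast hn
    have hx1 : x i ≤ 1 := by
      have h := Finset.single_le_sum (f := x) (fun j _ => h0 j) (Finset.mem_univ i)
      rw [hsum] at h; exact h
    have hm0 : (0 : ℚ) ≤ (m : ℚ) := by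
      rw [← hm]; exact mul_nonneg (le_of_lt hn0) (h0 i)
    have hmn : (m : ℚ) ≤ (n : ℚ) := by
      rw [← hm]
      calc (n : ℚ) * x i ≤ (n : ℚ) * 1 := by
            exact mul_le_mul_of_nonneg_left hx1 (le_of_lt hn0)
        _ = (n : ℚ) := by ring
    have hm0' : 0 ≤ m := by exact_mod_cast hm0
    refine ⟨m.toNat, ?_, ?_⟩
    · simp only [Set.mem_Iic]
      have hmn' : m ≤ (n : ℤ) := by exact_mod_cast hmn
      omega
    · have : ((m.toNat : ℤ) : ℚ) = (m : ℚ) := by rw [Int.toNat_of_nonneg hm0']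
      push_cast at this ⊢
      rw [this, ← hm]
      field_simp
  exact (Set.Finite.pi (fun _ => (Set.finite_Iic n).image _)).subset hsub

lemma vert_eq_coords {k n : ℕ} (hn : 2 ≤ n) {z z' : Fin k → ℚ} {i j : Fin k}
    (h : vert k n z i = vert k n z' j) :
    ∀ a, ((n : ℚ) - 1) * (z a - z' a) = stdVec k j a - stdVec k i a := by
  intro a
  have hh := congrFun h a
  unfold vert at hh
  have hn0 : (n : ℚ) ≠ 0 := by
    have : (0:ℚ) < (n:ℚ) := by exact_mod_cast (by omega : 0 < n)
    exact ne_of_gt this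
  field_simp at hh
  linarith

lemma hyperedge_inj {k n : ℕ} (hk : 2 ≤ k) (hn : 2 ≤ n) {z z' : Fin k → ℚ}
    (h : hyperedge k n z = hyperedge k n z') : z = z' := by
  by_contra hne
  obtain ⟨a, ha⟩ := Function.ne_iff.mp hne
  have hn1 : ((n : ℚ) - 1) ≠ 0 := by
    have : (2:ℚ) ≤ (n:ℚ) := by exact_mod_cast hn
    linarith
  have key : ∀ i : Fin k, ∃ j : Fin k,
      ∀ b, ((n : ℚ) - 1) * (z b - z' b) = stdVec k j b - stdVec k i b := by
    intro i
    have hmem : vert k n z i ∈ hyperedge k n z' := h ▸ vert_mem_hyperedge k n z i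
    obtain ⟨j, hj⟩ := hmem
    exact ⟨j, vert_eq_coords hn (funext fun b => congrFun hj b)⟩
  -- pick i₀ := a? we want i₀ arbitrary; use a itself
  obtain ⟨j₀, hj₀⟩ := key a
  have hda : ((n : ℚ) - 1) * (z a - z' a) ≠ 0 :=
    mul_ne_zero hn1 (sub_ne_zero_of_ne ha)
  have hja : j₀ ≠ a := by
    intro hh
    apply hda
    rw [hj₀ a, hh]; ring
  have hdai : ((n : ℚ) - 1) * (z a - z' a) = -1 := by
    rw [hj₀ a]
    simp [stdVec, hja.symm, (Ne.symm hja)]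
  -- pick another index
  have : Nontrivial (Fin k) := ⟨⟨⟨0, by omega⟩, ⟨1, by omega⟩, by simp [Fin.ext_iff]⟩⟩
  obtain ⟨a', ha'⟩ := exists_ne a
  obtain ⟨j₁, hj₁⟩ := key a'
  have h2 := hj₁ a
  rw [hdai] at h2
  unfold stdVec at h2
  rw [if_neg (Ne.symm ha')] at h2
  split_ifs at h2 <;> norm_num at h2

lemma vert_mem_disimplex {k n : ℕ} (hn : 2 ≤ n) {z : Fin k → ℚ}
    (hz : z ∈ disimplex k (n - 1)) (i : Fin k) : vert k n z i ∈ disimplex k n := by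
  obtain ⟨h0, hint, hsum⟩ := hz
  have hn0 : (n : ℚ) ≠ 0 := by
    have : (0:ℚ) < (n:ℚ) := by exact_mod_cast (by omega : 0 < n)
    exact ne_of_gt this
  have hnpos : (0:ℚ) < (n:ℚ) := by exact_mod_cast (by omega : 0 < n)
  have hcast : ((n - 1 : ℕ) : ℚ) = (n : ℚ) - 1 := by
    have : (1:ℕ) ≤ n := by omega
    push_cast [Nat.cast_sub this]
    ring
  have hn1pos : (0:ℚ) < (n:ℚ) - 1 := by
    have : (2:ℚ) ≤ (n:ℚ) := by exact_mod_cast hn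
    linarith
  refine ⟨?_, ?_, ?_⟩
  · intro j
    unfold vert stdVec
    have h1 : 0 ≤ (((n : ℚ) - 1) / n) * z j := by
      apply mul_nonneg (le_of_lt (div_pos hn1pos hnpos)) (h0 j)
    have h2 : (0:ℚ) ≤ (1 / n) * (if j = i then 1 else 0) := by
      apply mul_nonneg (le_of_lt (by positivity))
      split <;> norm_num
    linarith
  · intro j
    obtain ⟨m, hm⟩ := hint j
    rw [hcast] at hm
    refine ⟨m + (if j = i then 1 else 0), ?_⟩
    unfold vert stdVec
    push_cast
    rw [mul_add, ← mul_assoc]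
    rw [mul_div_cancel₀ _ hn0]  -- n * ((n-1)/n) = n - 1 ?
    rw [hm]
    rw [← mul_assoc, mul_one_div_cancel hn0]
    split <;> norm_num
  · unfold vert
    rw [Finset.sum_add_distrib, ← Finset.mul_sum, ← Finset.mul_sum, hsum, sum_stdVec]
    field_simp
    ring

/-- If all inadmissible labels are label `k` on the face `x_k = 0`, and `Z` is the
set of inadmissibly labeled vertices, then the number of monochromatic hyperedges
of `H_{k,n}` containing a vertex of `Z` is at most `(n/(n+k-2))·|Z|`. -/
theorem stmt6 (k n : ℕ) (hk : 2 ≤ k) (hn : 2 ≤ n)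
    (ℓ : (Fin k → ℚ) → Fin k)
    (hface : ∀ x ∈ disimplex k n, ¬ 0 < x (ℓ x) →
      x ⟨k - 1, by omega⟩ = 0 ∧ ℓ x = ⟨k - 1, by omega⟩) :
    ({e ∈ hyperedges k n | (∃ c, ∀ x ∈ e, ℓ x = c) ∧
        ∃ x ∈ e, x ∈ disimplex k n ∧ x ⟨k - 1, by omega⟩ = 0 ∧
          ℓ x = ⟨k - 1, by omega⟩}.ncard : ℚ)
      ≤ ((n : ℚ) / ((n : ℚ) + (k : ℚ) - 2)) *
        ({x ∈ disimplex k n | x ⟨k - 1, by omega⟩ = 0 ∧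
          ℓ x = ⟨k - 1, by omega⟩}.ncard : ℚ) := by
  have hkk : k - 1 < k := by omega
  set last : Fin k := ⟨k - 1, hkk⟩ with hlastdef
  have hnQ : (2:ℚ) ≤ (n:ℚ) := by exact_mod_cast hn
  have hkQ : (2:ℚ) ≤ (k:ℚ) := by exact_mod_cast hk
  have hn0 : (n : ℚ) ≠ 0 := by linarith
  have hnpos : (0:ℚ) < (n:ℚ) := by linarith
  have hn1pos : (0:ℚ) < (n:ℚ) - 1 := by linarith
  set Z : Set (Fin k → ℚ) :=
    {x ∈ disimplex k n | x last = 0 ∧ ℓ x = last} with hZdef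
  set E : Set (Set (Fin k → ℚ)) :=
    {e ∈ hyperedges k n | (∃ c, ∀ x ∈ e, ℓ x = c) ∧
        ∃ x ∈ e, x ∈ disimplex k n ∧ x last = 0 ∧ ℓ x = last} with hEdef
  show (E.ncard : ℚ) ≤ ((n : ℚ) / ((n : ℚ) + (k : ℚ) - 2)) * (Z.ncard : ℚ)
  set Ez : Set (Fin k → ℚ) :=
    {z | z ∈ disimplex k (n-1) ∧ z last = 0 ∧ hyperedge k n z ∈ E ∧
      ∀ i, i ≠ last → vert k n z i ∈ Z} with hEzdef
  -- E is the image of Ez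
  have hEimg : E = hyperedge k n '' Ez := by
    apply Set.Subset.antisymm
    · rintro e ⟨hehyp, ⟨c, hc⟩, x, hxe, hxD, hx0, hxl⟩
      obtain ⟨z, hzD, rfl⟩ := hehyp
      have hclast : c = last := by rw [← hc x hxe, hxl]
      obtain ⟨jx, hjx⟩ := hxe
      have hz0 : z last = 0 := by
        have h1 : (((n : ℚ) - 1) / n) * z last + (1 / n) * stdVec k jx last = 0 := by
          rw [hjx] at hx0
          exact hx0
        have h2 : (0:ℚ) ≤ z last := hzD.1 last
        have h3 : (0:ℚ) ≤ stdVec k jx last := by unfold stdVec; split <;> norm_num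
        have h4 : (0:ℚ) < ((n : ℚ) - 1) / n := div_pos hn1pos hnpos
        rcases lt_or_eq_of_le h2 with hlt | heq
        · exfalso
          nlinarith [mul_pos h4 hlt,
            mul_nonneg (le_of_lt (show (0:ℚ) < 1/n by positivity)) h3]
        · exact heq.symm
      refine ⟨z, ⟨hzD, hz0, ?_, ?_⟩, rfl⟩
      · exact ⟨⟨z, hzD, rfl⟩, ⟨c, hc⟩, x, ⟨jx, hjx⟩, hxD, hx0, hxl⟩
      · intro i hi
        refine ⟨vert_mem_disimplex hn hzD i, ?_, ?_⟩
        · show (((n : ℚ) - 1) / n) * z last + (1 / n) * stdVec k i last = 0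
          rw [hz0]
          have : stdVec k i last = 0 := by
            unfold stdVec; rw [if_neg (Ne.symm hi)]
          rw [this]; ring
        · rw [hc _ (vert_mem_hyperedge k n z i), hclast]
    · rintro e ⟨z, hz, rfl⟩
      exact hz.2.2.1
  have hinjEz : Set.InjOn (hyperedge k n) Ez :=
    fun a _ b _ h => hyperedge_inj hk hn h
  have hEzfin : Ez.Finite :=
    (disimplex_finite k (n-1) (by omega)).subset (fun z hz => hz.1)
  have hZfin : Z.Finite :=
    (disimplex_finite k n (by omega)).subset (fun x hx => hx.1)
  have hcardE : E.ncard = Ez.ncard := by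
    rw [hEimg, Set.ncard_image_of_injOn hinjEz]
  -- Finsets
  set ZF := hZfin.toFinset with hZF
  set EzF := hEzfin.toFinset with hEzF
  have hcardZ : Z.ncard = ZF.card := Set.ncard_eq_toFinset_card Z hZfin
  have hcardEz : Ez.ncard = EzF.card := Set.ncard_eq_toFinset_card Ez hEzfin
  -- the weight function
  set W : (Fin k → ℚ) × Fin k → ℚ := fun p => (n : ℚ) * vert k n p.1 p.2 p.2 with hWdef
  set P : Finset ((Fin k → ℚ) × Fin k) := EzF ×ˢ (Finset.univ.erase last) with hPdef
  -- lower identity : each edge contributes n + k - 2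
  have hlow : ∑ p ∈ P, W p = ((n:ℚ) + (k:ℚ) - 2) * EzF.card := by
    rw [hPdef, Finset.sum_product]
    have hrow : ∀ z ∈ EzF, ∑ i ∈ Finset.univ.erase last, W (z, i)
        = (n:ℚ) + (k:ℚ) - 2 := by
      intro z hz
      have hzEz : z ∈ Ez := hEzfin.mem_toFinset.mp hz
      obtain ⟨⟨h0, hint, hsum⟩, hz0, -, -⟩ := hzEz
      have hWz : ∀ i : Fin k, W (z, i) = ((n:ℚ) - 1) * z i + 1 := by
        intro i
        show (n : ℚ) * ((((n : ℚ) - 1) / n) * z i + (1 / n) * stdVec k i i) = _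
        have : stdVec k i i = 1 := by unfold stdVec; rw [if_pos rfl]
        rw [this]
        field_simp
      rw [Finset.sum_congr rfl (fun i _ => hWz i)]
      rw [Finset.sum_add_distrib, ← Finset.mul_sum]
      rw [Finset.sum_erase_eq_sub (Finset.mem_univ last), hsum, hz0]
      rw [Finset.sum_const, Finset.card_erase_of_mem (Finset.mem_univ last)]
      rw [Finset.card_univ, Fintype.card_fin]
      have hk1 : ((k - 1 : ℕ) : ℚ) = (k : ℚ) - 1 := by
        have : (1:ℕ) ≤ k := by omega
        push_cast [Nat.cast_sub this]; ring
      rw [nsmul_eq_mul, hk1]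
      ring
    rw [Finset.sum_congr rfl hrow, Finset.sum_const, nsmul_eq_mul]
    ring
  -- upper bound : each vertex of Z absorbs at most n
  have hmaps : ∀ p ∈ P, vert k n p.1 p.2 ∈ ZF := by
    rintro ⟨z, i⟩ hp
    rw [hPdef, Finset.mem_product] at hp
    have hzEz : z ∈ Ez := hEzfin.mem_toFinset.mp hp.1
    have hi : i ≠ last := (Finset.mem_erase.mp hp.2).1
    exact hZfin.mem_toFinset.mpr (hzEz.2.2.2 i hi)
  have hhigh : ∑ p ∈ P, W p ≤ (n:ℚ) * ZF.card := by
    rw [← Finset.sum_fiberwise_of_maps_to hmaps W]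
    have hfiber : ∀ y ∈ ZF, ∑ p ∈ P.filter (fun p => vert k n p.1 p.2 = y), W p ≤ (n:ℚ) := by
      intro y hy
      have hyZ : y ∈ Z := hZfin.mem_toFinset.mp hy
      obtain ⟨⟨hy0, hyint, hysum⟩, -, -⟩ := hyZ
      set F := P.filter (fun p => vert k n p.1 p.2 = y) with hFdef
      have hWy : ∀ p ∈ F, W p = (n:ℚ) * y p.2 := by
        intro p hpF
        have hpy : vert k n p.1 p.2 = y := (Finset.mem_filter.mp hpF).2
        rw [hWdef]
        show (n : ℚ) * vert k n p.1 p.2 p.2 = (n:ℚ) * y p.2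
        rw [hpy]
      rw [Finset.sum_congr rfl hWy]
      have hinj2 : ∀ p ∈ F, ∀ q ∈ F, p.2 = q.2 → p = q := by
        rintro ⟨z, i⟩ hpF ⟨z', i'⟩ hqF (h2 : i = i')
        subst h2
        have hpy : vert k n z i = y := (Finset.mem_filter.mp hpF).2
        have hqy : vert k n z' i = y := (Finset.mem_filter.mp hqF).2
        have hzz : z = z' := by
          funext a
          have hcoord := vert_eq_coords hn (hpy.trans hqy.symm) a
          rw [sub_self] at hcoord
          have hn1 : ((n : ℚ) - 1) ≠ 0 := by linarith
          have := mul_eq_zero.mp hcoord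
          rcases this with h | h
          · exact absurd h hn1
          · linarith [sub_eq_zero.mp h]
        rw [hzz]
      calc ∑ p ∈ F, (n:ℚ) * y p.2
          = ∑ i ∈ F.image Prod.snd, (n:ℚ) * y i :=
            (Finset.sum_image (s := F) (f := fun i => (n:ℚ) * y i) (g := Prod.snd) hinj2).symm
        _ ≤ ∑ i ∈ (Finset.univ : Finset (Fin k)), (n:ℚ) * y i := by
            apply Finset.sum_le_sum_of_subset_of_nonneg (Finset.subset_univ _)
            intro i _ _
            exact mul_nonneg (le_of_lt hnpos) (hy0 i)
        _ = (n:ℚ) * ∑ i, y i := by rw [Finset.mul_sum]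
        _ = (n:ℚ) := by rw [hysum]; ring
    calc ∑ y ∈ ZF, ∑ p ∈ P.filter (fun p => vert k n p.1 p.2 = y), W p
        ≤ ∑ y ∈ ZF, (n:ℚ) := Finset.sum_le_sum hfiber
      _ = (n:ℚ) * ZF.card := by rw [Finset.sum_const, nsmul_eq_mul]; ring
  -- combine
  have hkey : ((n:ℚ) + (k:ℚ) - 2) * (E.ncard : ℚ) ≤ (n:ℚ) * (Z.ncard : ℚ) := by
    rw [hcardE, hcardEz, hcardZ]
    calc ((n:ℚ) + (k:ℚ) - 2) * (EzF.card : ℚ) = ∑ p ∈ P, W p := hlow.symm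
      _ ≤ (n:ℚ) * ZF.card := hhigh
  have hc2 : (0:ℚ) < (n:ℚ) + (k:ℚ) - 2 := by linarith
  rw [div_mul_eq_mul_div, le_div_iff₀ hc2]
  nlinarith [hkey]
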